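/- If g is holomorphic on the unit disc and q ≥ 1, then the function v(z) = |∇|g|^q|(z)^2 = q^2 |g(z)|^{2q-2} |g'(z)|^2 is a nonnegative subharmonic function on the unit disc. -/

import Mathlib

open MeasureTheory Metric
open intervalIntegral

noncomputable def Complex.abs : AbsoluteValue ℂ ℝ where
  toFun z := ‖z‖
  map_mul' := norm_mul
  nonneg' := norm_nonneg
  eq_zero' _ := norm_eq_zero
  add_le' := norm_add_le

@[simp] lemma Complex.norm_eq_abs (z : ℂ) : ‖z‖ = Complex.abs z := rfl

@[simp] lemma Complex.abs_conj (z : ℂ) : Complex.abs ((starRingEnd ℂ) z) = Complex.abs z :=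
  Complex.norm_conj z

@[simp] lemma Complex.abs_ofReal (r : ℝ) : Complex.abs (r : ℂ) = |r| := Complex.norm_real r

lemma Complex.abs_re_le_abs (z : ℂ) : |z.re| ≤ Complex.abs z := Complex.abs_re_le_norm z

lemma Complex.sq_abs (z : ℂ) : Complex.abs z ^ 2 = Complex.normSq z := Complex.sq_norm z

lemma Complex.normSq_eq_abs (z : ℂ) : Complex.normSq z = Complex.abs z ^ 2 :=
  Complex.normSq_eq_norm_sq z

lemma Complex.abs_exp (z : ℂ) : Complex.abs (Complex.exp z) = Real.exp z.re := Complex.norm_exp z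

lemma Complex.continuous_abs : Continuous Complex.abs := continuous_norm


lemma mean_val {F : ℂ → ℂ} {z : ℂ} {r : ℝ} (hr : 0 < r)
    (hc : ContinuousOn F (closedBall z r)) (hd : ∀ w ∈ ball z r, DifferentiableAt ℂ F w) :
    ∫ θ in (0:ℝ)..(2*Real.pi), F (circleMap z r θ) = (2*Real.pi : ℝ) • F z := by
  have h := Complex.circleIntegral_sub_center_inv_smul_of_differentiable_on_off_countable hr
    Set.countable_empty hc (fun w hw => hd w hw.1)
  rw [circleIntegral] at h
  have key : ∀ θ : ℝ, deriv (circleMap z r) θ •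
      ((circleMap z r θ - z)⁻¹ • F (circleMap z r θ)) = Complex.I * F (circleMap z r θ) := by
    intro θ
    rw [deriv_circleMap, circleMap_sub_center, smul_eq_mul, smul_eq_mul]
    have h0 : circleMap 0 r θ ≠ 0 := by
      simpa using circleMap_ne_center (c := (0:ℂ)) hr.ne' (θ := θ)
    field_simp
  rw [intervalIntegral.integral_congr (g := fun θ => Complex.I * F (circleMap z r θ))
    (fun θ _ => key θ)] at h
  rw [intervalIntegral.integral_const_mul] at h
  have : Complex.I * ∫ θ in (0:ℝ)..(2*Real.pi), F (circleMap z r θ)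
      = Complex.I * ((2*Real.pi : ℝ) • F z) := by
    rw [h, smul_eq_mul, Complex.real_smul]; push_cast; ring
  exact mul_left_cancel₀ Complex.I_ne_zero this

lemma norm_center {F : ℂ → ℂ} {z : ℂ} {r : ℝ} (hr : 0 < r)
    (hc : ContinuousOn F (closedBall z r)) (hd : ∀ w ∈ ball z r, DifferentiableAt ℂ F w) :
    Complex.abs (F z) ≤ (∫ θ in (0:ℝ)..(2*Real.pi), Complex.abs (F (circleMap z r θ))) / (2*Real.pi) := by
  have h := mean_val hr hc hd
  have h2 : (2*Real.pi) * Complex.abs (F z) = ‖∫ θ in (0:ℝ)..(2*Real.pi), F (circleMap z r θ)‖ := by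
    rw [h, norm_smul, Real.norm_eq_abs, abs_of_nonneg (by positivity), Complex.norm_eq_abs]
  have h3 := intervalIntegral.norm_integral_le_integral_norm
    (f := fun θ => F (circleMap z r θ)) (μ := volume) (a := 0) (b := 2*Real.pi)
    (by positivity)
  rw [← h2] at h3
  have h4 : (∫ θ in (0:ℝ)..(2*Real.pi), ‖F (circleMap z r θ)‖)
      = ∫ θ in (0:ℝ)..(2*Real.pi), Complex.abs (F (circleMap z r θ)) := by
    simp [Complex.norm_eq_abs]
  rw [h4] at h3
  rw [le_div_iff₀ (by positivity)]
  linarith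

noncomputable def Wf (z : ℂ) (r : ℝ) (a : ℂ) (ζ : ℂ) : ℂ :=
  if Complex.abs (a - z) < r then (r:ℂ) - (starRingEnd ℂ) (a - z) * (ζ - z) / r
  else (ζ - a) * (starRingEnd ℂ) (z - a) / Complex.abs (z - a)

noncomputable def phif (τ : ℝ) (z : ℂ) (r : ℝ) (a : ℂ) (ζ : ℂ) : ℂ :=
  Complex.exp (τ * Complex.log (Wf z r a ζ))

lemma Wf_diff (z : ℂ) (r : ℝ) (a : ℂ) (ζ : ℂ) : DifferentiableAt ℂ (Wf z r a) ζ := by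
  unfold Wf; split_ifs <;> fun_prop

lemma Wf_re_pos {z : ℂ} {r : ℝ} {a : ℂ} (hr : 0 < r) (ha : Complex.abs (a - z) ≠ r)
    (haz : a ≠ z) {ζ : ℂ} (hζ : ζ ∈ closedBall z r) : 0 < (Wf z r a ζ).re := by
  have hζr : Complex.abs (ζ - z) ≤ r := by
    simpa [Complex.dist_eq] using mem_closedBall.mp hζ
  unfold Wf
  split_ifs with h
  · -- inside
    have hu : Complex.abs ((starRingEnd ℂ) (a - z) * (ζ - z) / r) ≤ Complex.abs (a - z) := by
      rw [map_div₀, map_mul, Complex.abs_conj]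
      rw [Complex.abs_ofReal, abs_of_pos hr, div_le_iff₀ hr]
      calc Complex.abs (a - z) * Complex.abs (ζ - z) ≤ Complex.abs (a - z) * r :=
        mul_le_mul_of_nonneg_left hζr (Complex.abs.nonneg _)
      _ = Complex.abs (a - z) * r := rfl
    have h2 := (Complex.abs_re_le_abs ((starRingEnd ℂ) (a - z) * (ζ - z) / r))
    simp only [Complex.sub_re, Complex.ofReal_re]
    have := abs_le.mp (h2.trans hu)
    linarith [this.2]
  · -- outside
    have hx : r < Complex.abs (z - a) := by
      rw [← AbsoluteValue.map_sub Complex.abs a z] at *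
      rcases lt_or_eq_of_le (not_lt.mp h) with h' | h'
      · exact h'
      · exact absurd h'.symm ha
    have hx0 : (0:ℝ) < Complex.abs (z - a) := lt_trans hr hx
    have hsplit : (ζ - a) * (starRingEnd ℂ) (z - a)
        = (ζ - z) * (starRingEnd ℂ) (z - a) + Complex.normSq (z - a) := by
      rw [← Complex.mul_conj]; ring
    rw [hsplit]
    rw [Complex.div_re]
    have hden : Complex.normSq ((Complex.abs (z - a) : ℂ)) = Complex.abs (z - a) ^ 2 := by
      simp [Complex.normSq_ofReal, sq]
    have him : ((Complex.abs (z - a) : ℂ)).im = 0 := by simp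
    rw [him]
    simp only [mul_zero, zero_div, add_zero]
    rw [hden]
    have hre : ((ζ - z) * (starRingEnd ℂ) (z - a) + (Complex.normSq (z - a) : ℂ)).re
        = ((ζ - z) * (starRingEnd ℂ) (z - a)).re + Complex.normSq (z - a) := by
      simp [Complex.add_re]
    rw [hre]
    have hb : -(r * Complex.abs (z - a)) ≤ ((ζ - z) * (starRingEnd ℂ) (z - a)).re := by
      have h1 := Complex.abs_re_le_abs ((ζ - z) * (starRingEnd ℂ) (z - a))
      have h2 : Complex.abs ((ζ - z) * (starRingEnd ℂ) (z - a)) ≤ r * Complex.abs (z - a) := by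
        rw [map_mul, Complex.abs_conj]
        exact mul_le_mul_of_nonneg_right hζr (Complex.abs.nonneg _)
      have := abs_le.mp (h1.trans h2)
      linarith [this.1]
    have hnormsq : Complex.normSq (z - a) = Complex.abs (z - a) ^ 2 := by
      rw [Complex.sq_abs]
    have hnum : 0 < ((ζ - z) * (starRingEnd ℂ) (z - a)).re + Complex.normSq (z - a) := by
      rw [hnormsq]
      nlinarith
    have hreal : ((Complex.abs (z - a):ℂ)).re = Complex.abs (z - a) := by simp
    rw [hreal]
    positivity

lemma Wf_abs_sphere {z : ℂ} {r : ℝ} {a : ℂ} (hr : 0 < r) (haz : a ≠ z) {ζ : ℂ}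
    (hζ : ζ ∈ sphere z r) : Complex.abs (Wf z r a ζ) = Complex.abs (ζ - a) := by
  have hζr : Complex.abs (ζ - z) = r := by
    simpa [Complex.dist_eq] using mem_sphere_iff_norm.mp hζ
  unfold Wf
  split_ifs with h
  · set w : ℂ := ζ - z with hw
    have hcc : (starRingEnd ℂ) w * w = ((r:ℂ))^2 := by
      rw [mul_comm, Complex.mul_conj]
      rw [Complex.normSq_eq_abs, hζr]
      push_cast; ring
    have hrne : (r:ℂ) ≠ 0 := by exact_mod_cast hr.ne'
    have key : ((r:ℂ) - (starRingEnd ℂ) (a - z) * w / r) * ((starRingEnd ℂ) w)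
        = (r:ℂ) * ((starRingEnd ℂ) w - (starRingEnd ℂ) (a - z)) := by
      have h1 : (starRingEnd ℂ) (a - z) * w / (r:ℂ) * (starRingEnd ℂ) w
          = (starRingEnd ℂ) (a-z) * (r:ℂ) := by
        rw [div_mul_eq_mul_div, div_eq_iff hrne]
        linear_combination ((starRingEnd ℂ) (a - z)) * hcc
      calc ((r:ℂ) - (starRingEnd ℂ) (a - z) * w / r) * ((starRingEnd ℂ) w)
          = (r:ℂ) * (starRingEnd ℂ) w - ((starRingEnd ℂ) (a - z) * w / r * (starRingEnd ℂ) w) := by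
            ring
        _ = (r:ℂ) * ((starRingEnd ℂ) w - (starRingEnd ℂ) (a - z)) := by rw [h1]; ring
    have habs := congrArg Complex.abs key
    rw [map_mul, map_mul, Complex.abs_conj, hζr, Complex.abs_ofReal, abs_of_pos hr] at habs
    have h2 : Complex.abs ((starRingEnd ℂ) w - (starRingEnd ℂ) (a - z))
        = Complex.abs (ζ - a) := by
      rw [← map_sub, Complex.abs_conj]
      congr 1; rw [hw]; ring
    rw [h2, mul_comm r] at habs
    exact mul_right_cancel₀ hr.ne' habs
  · have hx0 : (0:ℝ) < Complex.abs (z - a) := by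
      have : z - a ≠ 0 := sub_ne_zero.mpr (Ne.symm haz)
      exact (Complex.abs.pos this)
    rw [map_div₀, map_mul, Complex.abs_conj, Complex.abs_ofReal, abs_of_pos hx0]
    field_simp

lemma Wf_abs_center {z : ℂ} {r : ℝ} {a : ℂ} (hr : 0 < r) (ha : Complex.abs (a - z) ≠ r)
    (haz : a ≠ z) : Complex.abs (z - a) ≤ Complex.abs (Wf z r a z) := by
  unfold Wf
  split_ifs with h
  · simp only [sub_self, mul_zero, zero_div, sub_zero]
    rw [Complex.abs_ofReal, abs_of_pos hr, AbsoluteValue.map_sub]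
    exact le_of_lt h
  · have hx0 : (0:ℝ) < Complex.abs (z - a) := Complex.abs.pos (sub_ne_zero.mpr (Ne.symm haz))
    rw [map_div₀, map_mul, Complex.abs_conj, Complex.abs_ofReal, abs_of_pos hx0]
    rw [AbsoluteValue.map_sub Complex.abs z a]
    field_simp
    exact le_rfl

lemma phif_diff {τ : ℝ} {z : ℂ} {r : ℝ} {a : ℂ} {ζ : ℂ} (h : 0 < (Wf z r a ζ).re) :
    DifferentiableAt ℂ (phif τ z r a) ζ := by
  unfold phif
  apply DifferentiableAt.cexp
  apply DifferentiableAt.const_mul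
  exact (Wf_diff z r a ζ).clog (Complex.mem_slitPlane_iff.mpr (Or.inl h))

lemma phif_abs {τ : ℝ} {z : ℂ} {r : ℝ} {a : ℂ} {ζ : ℂ} (h : 0 < (Wf z r a ζ).re) :
    Complex.abs (phif τ z r a ζ) = Complex.abs (Wf z r a ζ) ^ τ := by
  have hW : Wf z r a ζ ≠ 0 := by
    intro h0; rw [h0] at h; simp at h
  have habs : 0 < Complex.abs (Wf z r a ζ) := Complex.abs.pos hW
  unfold phif
  rw [Complex.abs_exp]
  have : ((τ:ℂ) * Complex.log (Wf z r a ζ)).re = τ * Real.log (Complex.abs (Wf z r a ζ)) := by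
    rw [Complex.mul_re, Complex.ofReal_re, Complex.ofReal_im, Complex.log_re, Complex.norm_eq_abs]
    ring
  rw [this, Real.rpow_def_of_pos habs]
  ring_nf

section msets
variable {α : Type*}

lemma mprod_diff (s : Multiset α) (f : α → ℂ → ℂ) (x : ℂ)
    (h : ∀ a ∈ s, DifferentiableAt ℂ (f a) x) :
    DifferentiableAt ℂ (fun ζ => (s.map (fun a => f a ζ)).prod) x := by
  induction s using Multiset.induction_on with
  | empty => simpa using differentiableAt_const (1:ℂ)
  | cons a s ih =>
    simp only [Multiset.map_cons, Multiset.prod_cons]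
    exact ((h a (Multiset.mem_cons_self a s)).mul
      (ih (fun b hb => h b (Multiset.mem_cons_of_mem hb))))

lemma mprod_abs (s : Multiset ℂ) : Complex.abs s.prod = (s.map Complex.abs).prod := by
  induction s using Multiset.induction_on with
  | empty => simp
  | cons a s ih => simp [ih]

lemma mprod_nonneg (s : Multiset α) (f : α → ℝ) (h : ∀ a ∈ s, 0 ≤ f a) :
    0 ≤ (s.map f).prod := by
  apply Multiset.prod_nonneg
  intro x hx
  obtain ⟨a, ha, rfl⟩ := Multiset.mem_map.mp hx
  exact h a ha

lemma mprod_mono (s : Multiset α) (f g : α → ℝ) (h0 : ∀ a ∈ s, 0 ≤ f a)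
    (hle : ∀ a ∈ s, f a ≤ g a) : (s.map f).prod ≤ (s.map g).prod := by
  induction s using Multiset.induction_on with
  | empty => simp
  | cons a s ih =>
    simp only [Multiset.map_cons, Multiset.prod_cons]
    have h1 := h0 a (Multiset.mem_cons_self a s)
    have h2 := hle a (Multiset.mem_cons_self a s)
    have h3 := mprod_nonneg s f (fun b hb => h0 b (Multiset.mem_cons_of_mem hb))
    have h4 := ih (fun b hb => h0 b (Multiset.mem_cons_of_mem hb))
      (fun b hb => hle b (Multiset.mem_cons_of_mem hb))
    nlinarith

lemma mprod_rpow (s : Multiset α) (f : α → ℝ) (τ : ℝ) (h : ∀ a ∈ s, 0 ≤ f a) :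
    ((s.map f).prod) ^ τ = (s.map (fun a => f a ^ τ)).prod := by
  induction s using Multiset.induction_on with
  | empty => simp
  | cons a s ih =>
    simp only [Multiset.map_cons, Multiset.prod_cons]
    rw [Real.mul_rpow (h a (Multiset.mem_cons_self a s))
      (mprod_nonneg s f (fun b hb => h b (Multiset.mem_cons_of_mem hb)))]
    rw [ih (fun b hb => h b (Multiset.mem_cons_of_mem hb))]
end msets

lemma poly_abs_factor (p : Polynomial ℂ) (hp : p ≠ 0) (ζ : ℂ) :
    Complex.abs (p.eval ζ)
      = Complex.abs p.leadingCoeff * (p.roots.map (fun a => Complex.abs (ζ - a))).prod := by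
  conv_lhs => rw [(IsAlgClosed.splits p).eq_prod_roots]
  rw [Polynomial.eval_mul, Polynomial.eval_C, map_mul, Polynomial.eval_multiset_prod]
  rw [Multiset.map_map, mprod_abs, Multiset.map_map]
  congr 1
  exact congrArg Multiset.prod (Multiset.map_congr rfl (fun a _ => by simp))

lemma step1 (p : Polynomial ℂ) (z : ℂ) {r : ℝ} (hr : 0 < r) (hpz : p.eval z ≠ 0)
    (n : ℕ) {τ : ℝ} (hτ0 : 0 ≤ τ)
    (hroots : ∀ a ∈ p.roots, Complex.abs (a - z) ≠ r) :
    Complex.abs (Polynomial.eval z (Polynomial.derivative p)) ^ 2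
        * Complex.abs (p.eval z) ^ ((n:ℝ) + τ)
      ≤ (∫ θ in (0:ℝ)..(2*Real.pi),
          Complex.abs (Polynomial.eval (circleMap z r θ) (Polynomial.derivative p)) ^ 2 *
          Complex.abs (Polynomial.eval (circleMap z r θ) p) ^ ((n:ℝ) + τ)) / (2*Real.pi) := by
  have hp : p ≠ 0 := fun h => hpz (by simp [h])
  have haz : ∀ a ∈ p.roots, a ≠ z := by
    intro a ha h
    exact hpz (h ▸ (Polynomial.isRoot_of_mem_roots ha))
  set K : ℝ := Complex.abs p.leadingCoeff ^ τ with hK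
  have hK0 : 0 ≤ K := Real.rpow_nonneg (Complex.abs.nonneg _) τ
  set F : ℂ → ℂ := fun ζ => (Polynomial.eval ζ (Polynomial.derivative p))^2
      * (Polynomial.eval ζ p)^n
      * ((K:ℂ) * (p.roots.map (fun a => phif τ z r a ζ)).prod) with hF
  have hWre : ∀ a ∈ p.roots, ∀ ζ ∈ closedBall z r, 0 < (Wf z r a ζ).re :=
    fun a ha ζ hζ => Wf_re_pos hr (hroots a ha) (haz a ha) hζ
  have hdF : ∀ ζ ∈ closedBall z r, DifferentiableAt ℂ F ζ := by
    intro ζ hζ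
    apply DifferentiableAt.mul
    · exact ((Polynomial.differentiableAt _).pow 2).mul ((Polynomial.differentiableAt _).pow n)
    · exact (differentiableAt_const _).mul
        (mprod_diff _ _ _ (fun a ha => phif_diff (hWre a ha ζ hζ)))
  have hc : ContinuousOn F (closedBall z r) :=
    fun ζ hζ => (hdF ζ hζ).continuousAt.continuousWithinAt
  have habsF : ∀ ζ ∈ closedBall z r, Complex.abs (F ζ)
      = Complex.abs (Polynomial.eval ζ (Polynomial.derivative p)) ^ 2
        * Complex.abs (Polynomial.eval ζ p) ^ n
        * (K * (p.roots.map (fun a => Complex.abs (Wf z r a ζ) ^ τ)).prod) := by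
    intro ζ hζ
    rw [hF]
    simp only [map_mul, map_pow]
    congr 1
    rw [Complex.abs_ofReal, abs_of_nonneg hK0]
    congr 1
    rw [mprod_abs, Multiset.map_map]
    exact congrArg Multiset.prod
      (Multiset.map_congr rfl (fun a ha => phif_abs (hWre a ha ζ hζ)))
  have hsphere_ne : ∀ θ : ℝ, Polynomial.eval (circleMap z r θ) p ≠ 0 := by
    intro θ h
    have hmem : circleMap z r θ ∈ p.roots := by
      rw [Polynomial.mem_roots hp]
      exact h
    have := hroots _ hmem
    apply this
    have := circleMap_mem_sphere z hr.le θ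
    simpa [Complex.dist_eq, AbsoluteValue.map_sub] using mem_sphere_iff_norm.mp this
  have hKprod : ∀ ζ : ℂ, Polynomial.eval ζ p ≠ 0 →
      K * (p.roots.map (fun a => Complex.abs (ζ - a) ^ τ)).prod
        = Complex.abs (Polynomial.eval ζ p) ^ τ := by
    intro ζ _
    rw [poly_abs_factor p hp ζ, Real.mul_rpow (Complex.abs.nonneg _)
      (mprod_nonneg _ _ (fun a _ => Complex.abs.nonneg _)),
      mprod_rpow _ _ τ (fun a _ => Complex.abs.nonneg _)]
  have hFsphere : ∀ θ : ℝ, Complex.abs (F (circleMap z r θ))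
      = Complex.abs (Polynomial.eval (circleMap z r θ) (Polynomial.derivative p)) ^ 2 *
        Complex.abs (Polynomial.eval (circleMap z r θ) p) ^ ((n:ℝ) + τ) := by
    intro θ
    have hmem : circleMap z r θ ∈ closedBall z r :=
      sphere_subset_closedBall (circleMap_mem_sphere z hr.le θ)
    rw [habsF _ hmem]
    have hWs : (p.roots.map (fun a => Complex.abs (Wf z r a (circleMap z r θ)) ^ τ)).prod
        = (p.roots.map (fun a => Complex.abs ((circleMap z r θ) - a) ^ τ)).prod := by
      exact congrArg Multiset.prod (Multiset.map_congr rfl (fun a ha => by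
        rw [Wf_abs_sphere hr (haz a ha) (circleMap_mem_sphere z hr.le θ)]))
    rw [hWs, hKprod _ (hsphere_ne θ)]
    have hpos : 0 < Complex.abs (Polynomial.eval (circleMap z r θ) p) :=
      Complex.abs.pos (hsphere_ne θ)
    rw [mul_assoc, ← Real.rpow_natCast (Complex.abs (Polynomial.eval (circleMap z r θ) p)) n,
      ← Real.rpow_add hpos]
  have hFz : Complex.abs (Polynomial.eval z (Polynomial.derivative p)) ^ 2
      * Complex.abs (p.eval z) ^ ((n:ℝ) + τ) ≤ Complex.abs (F z) := by
    rw [habsF z (mem_closedBall_self hr.le)]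
    have hmono : (p.roots.map (fun a => Complex.abs (z - a) ^ τ)).prod
        ≤ (p.roots.map (fun a => Complex.abs (Wf z r a z) ^ τ)).prod := by
      apply mprod_mono
      · exact fun a _ => Real.rpow_nonneg (Complex.abs.nonneg _) τ
      · exact fun a ha => Real.rpow_le_rpow (Complex.abs.nonneg _)
          (Wf_abs_center hr (hroots a ha) (haz a ha)) hτ0
    have hz' : K * (p.roots.map (fun a => Complex.abs (z - a) ^ τ)).prod
        = Complex.abs (Polynomial.eval z p) ^ τ := hKprod z hpz
    have hposz : 0 < Complex.abs (Polynomial.eval z p) := Complex.abs.pos hpz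
    calc Complex.abs (Polynomial.eval z (Polynomial.derivative p)) ^ 2
          * Complex.abs (p.eval z) ^ ((n:ℝ) + τ)
        = Complex.abs (Polynomial.eval z (Polynomial.derivative p)) ^ 2
          * Complex.abs (p.eval z) ^ n * (K * (p.roots.map
            (fun a => Complex.abs (z - a) ^ τ)).prod) := by
          rw [hz', mul_assoc, ← Real.rpow_natCast (Complex.abs (p.eval z)) n,
            ← Real.rpow_add hposz]
      _ ≤ _ := by
          apply mul_le_mul_of_nonneg_left _ (by positivity)
          exact mul_le_mul_of_nonneg_left hmono hK0
  have hnc := norm_center hr hc (fun w hw => hdF w (ball_subset_closedBall hw))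
  have hint : (∫ θ in (0:ℝ)..(2*Real.pi), Complex.abs (F (circleMap z r θ)))
      = ∫ θ in (0:ℝ)..(2*Real.pi),
          Complex.abs (Polynomial.eval (circleMap z r θ) (Polynomial.derivative p)) ^ 2 *
          Complex.abs (Polynomial.eval (circleMap z r θ) p) ^ ((n:ℝ) + τ) :=
    intervalIntegral.integral_congr (fun θ _ => hFsphere θ)
  rw [hint] at hnc
  exact le_trans hFz hnc

lemma step2 (p : Polynomial ℂ) (z : ℂ) {r : ℝ} (hr : 0 < r) (hpz : p.eval z ≠ 0)
    (n : ℕ) {τ : ℝ} (hτ0 : 0 ≤ τ) :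
    Complex.abs (Polynomial.eval z (Polynomial.derivative p)) ^ 2
        * Complex.abs (p.eval z) ^ ((n:ℝ) + τ)
      ≤ (∫ θ in (0:ℝ)..(2*Real.pi),
          Complex.abs (Polynomial.eval (circleMap z r θ) (Polynomial.derivative p)) ^ 2 *
          Complex.abs (Polynomial.eval (circleMap z r θ) p) ^ ((n:ℝ) + τ)) / (2*Real.pi) := by
  have hβ0 : (0:ℝ) ≤ (n:ℝ) + τ := by positivity
  set G : ℂ → ℝ := fun ζ => Complex.abs (Polynomial.eval ζ (Polynomial.derivative p)) ^ 2 *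
      Complex.abs (Polynomial.eval ζ p) ^ ((n:ℝ) + τ) with hG
  have hGcont : Continuous G := by
    apply Continuous.mul
    · exact (Complex.continuous_abs.comp (Polynomial.continuous _)).pow 2
    · rw [continuous_iff_continuousAt]
      intro x
      exact (Real.continuousAt_rpow_const _ _ (Or.inr hβ0)).comp
        ((Complex.continuous_abs.comp (Polynomial.continuous p)).continuousAt)
  have hGnonneg : ∀ ζ, 0 ≤ G ζ := by
    intro ζ; rw [hG]; positivity
  set B : Set ℝ := (fun a => Complex.abs (a - z)) '' {a : ℂ | a ∈ p.roots} with hB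
  have hBfin : B.Finite := Set.Finite.image _ (p.roots.finite_toSet)
  have hex : ∀ k : ℕ, ∃ s : ℝ, s ∈ Set.Ioo (max (r/2) (r - 1/(k+1))) r \ B := by
    intro k
    have hlt : max (r/2) (r - 1/(k+1)) < r := by
      apply max_lt (by linarith)
      have : (0:ℝ) < 1/(k+1) := by positivity
      linarith
    exact ((Set.Ioo_infinite hlt).diff hBfin).nonempty
  set s : ℕ → ℝ := fun k => (hex k).choose with hs
  have hsIoo : ∀ k : ℕ, s k ∈ Set.Ioo (max (r/2) (r - 1/((k:ℝ)+1))) r :=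
    fun k => (hex k).choose_spec.1
  have hsB : ∀ k, s k ∉ B := fun k => (hex k).choose_spec.2
  have hs0' : ∀ k, 0 < s k := by
    intro k
    have := (hsIoo k).1
    have h2 := le_max_left (r/2) (r - 1/(k+1))
    linarith
  have hsr : ∀ k, s k ≤ r := fun k => (hsIoo k).2.le
  have hstend : Filter.Tendsto s Filter.atTop (nhds r) := by
    apply tendsto_of_tendsto_of_tendsto_of_le_of_le
      (g := fun k : ℕ => r - 1/(k+1)) (h := fun _ => r)
    · have h1 : Filter.Tendsto (fun k : ℕ => 1/((k:ℝ)+1)) Filter.atTop (nhds 0) :=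
        tendsto_one_div_add_atTop_nhds_zero_nat
      have := Filter.Tendsto.const_sub r h1
      simpa using this
    · exact tendsto_const_nhds
    · intro k
      have := (hsIoo k).1
      have h2 := le_max_right (r/2) (r - 1/(k+1))
      linarith
    · exact fun k => hsr k
  have hroots_k : ∀ k, ∀ a ∈ p.roots, Complex.abs (a - z) ≠ s k := by
    intro k a ha h
    exact hsB k ⟨a, ha, h⟩
  have hstep1 : ∀ k, Complex.abs (Polynomial.eval z (Polynomial.derivative p)) ^ 2
      * Complex.abs (p.eval z) ^ ((n:ℝ) + τ)
      ≤ (∫ θ in (0:ℝ)..(2*Real.pi), G (circleMap z (s k) θ)) / (2*Real.pi) := by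
    intro k
    exact step1 p z (hs0' k) hpz n hτ0 (hroots_k k)
  -- limit of integrals
  obtain ⟨x0, _, hM'⟩ := (isCompact_closedBall z r).exists_isMaxOn
    ⟨z, mem_closedBall_self hr.le⟩ hGcont.continuousOn
  have hM : ∀ y ∈ closedBall z r, G y ≤ G x0 := fun y hy => hM' hy
  have hmemk : ∀ k θ, circleMap z (s k) θ ∈ closedBall z r := by
    intro k θ
    exact closedBall_subset_closedBall (hsr k) (circleMap_mem_closedBall z (hs0' k).le θ)
  have htendI : Filter.Tendsto (fun k => ∫ θ in (0:ℝ)..(2*Real.pi), G (circleMap z (s k) θ))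
      Filter.atTop (nhds (∫ θ in (0:ℝ)..(2*Real.pi), G (circleMap z r θ))) := by
    apply intervalIntegral.tendsto_integral_filter_of_dominated_convergence (bound := fun _ => G x0)
    · filter_upwards with k
      exact (hGcont.comp (continuous_circleMap z (s k))).aestronglyMeasurable
    · filter_upwards with k
      filter_upwards with θ _
      rw [Real.norm_eq_abs, abs_of_nonneg (hGnonneg _)]
      exact hM _ (hmemk k θ)
    · exact intervalIntegrable_const
    · filter_upwards with θ _
      have hcirc : Filter.Tendsto (fun k => circleMap z (s k) θ) Filter.atTop
          (nhds (circleMap z r θ)) := by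
        have hcont : Continuous (fun t : ℝ => circleMap z t θ) := by
          unfold circleMap
          exact continuous_const.add (Complex.continuous_ofReal.mul continuous_const)
        exact (hcont.tendsto r).comp hstend
      exact (hGcont.tendsto _).comp hcirc
  exact ge_of_tendsto' (htendI.div_const (2*Real.pi)) hstep1

lemma step3 {g : ℂ → ℂ} (hg : DifferentiableOn ℂ g (ball 0 1)) {z : ℂ} {r : ℝ} (hr : 0 < r)
    (hsub : closedBall z r ⊆ ball (0:ℂ) 1) (hgz : g z ≠ 0) (n : ℕ) {τ : ℝ} (hτ0 : 0 ≤ τ) :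
    Complex.abs (deriv g z) ^ 2 * Complex.abs (g z) ^ ((n:ℝ) + τ)
      ≤ (∫ θ in (0:ℝ)..(2*Real.pi),
          Complex.abs (deriv g (circleMap z r θ)) ^ 2 *
          Complex.abs (g (circleMap z r θ)) ^ ((n:ℝ) + τ)) / (2*Real.pi) := by
  have hβ0 : (0:ℝ) ≤ (n:ℝ) + τ := by positivity
  -- r + |z| < 1
  have hr1 : r + Complex.abs z < 1 := by
    by_cases hz : z = 0
    · subst hz
      have := hsub (by simp [mem_closedBall, Complex.dist_eq, Complex.abs_ofReal,
        abs_of_pos hr] : (r:ℂ) ∈ closedBall 0 r)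
      simp only [mem_ball, Complex.dist_eq, sub_zero] at this
      simpa [Complex.abs_ofReal, abs_of_pos hr] using this
    · set u : ℂ := z / Complex.abs z with hu
      have hzabs : (0:ℝ) < Complex.abs z := Complex.abs.pos hz
      have hmem : z + r * u ∈ closedBall z r := by
        simp only [mem_closedBall, Complex.dist_eq, Complex.norm_eq_abs, add_sub_cancel_left]
        rw [map_mul, hu, map_div₀, Complex.abs_ofReal, Complex.abs_ofReal]
        rw [abs_of_pos hr, abs_of_nonneg (Complex.abs.nonneg z)]
        field_simp
        exact le_rfl
      have h2 := hsub hmem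
      simp only [mem_ball, Complex.dist_eq, Complex.norm_eq_abs, sub_zero] at h2
      have h3 : Complex.abs (z + r * u) = Complex.abs z + r := by
        have : z + r * u = z * (1 + r / Complex.abs z) := by
          rw [hu]; field_simp
        rw [this, map_mul]
        have habs2 : Complex.abs (1 + (r:ℂ) / Complex.abs z) = 1 + r / Complex.abs z := by
          rw [show (1 + (r:ℂ) / Complex.abs z) = (((1 + r / Complex.abs z : ℝ)) : ℂ) by push_cast; ring]
          rw [Complex.abs_ofReal, abs_of_pos (by positivity)]
        rw [habs2]
        field_simp
      rw [h3] at h2; linarith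
  set R : ℝ := 1 - Complex.abs z with hRdef
  have hrR : r < R := by simp only [hRdef]; linarith
  have hR0 : 0 < R := lt_trans hr hrR
  set R' : NNReal := ⟨(r + R)/2, by positivity⟩ with hR'
  have hrR' : r < (R' : ℝ) := by show r < (r + R)/2; linarith
  have hR'R : (R' : ℝ) < R := by show (r + R)/2 < R; linarith
  have hR'0 : 0 < R' := by
    rw [← NNReal.coe_lt_coe, NNReal.coe_zero]
    show (0:ℝ) < (r + R)/2; positivity
  have hsubR' : closedBall z (R' : ℝ) ⊆ ball (0:ℂ) 1 := by
    intro w hw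
    simp only [mem_closedBall, Complex.dist_eq, Complex.norm_eq_abs] at hw
    simp only [mem_ball, Complex.dist_eq, Complex.norm_eq_abs, sub_zero]
    calc Complex.abs w ≤ Complex.abs (w - z) + Complex.abs z := by
          simpa using Complex.abs.add_le (w - z) z
      _ ≤ (R':ℝ) + Complex.abs z := by linarith
      _ < R + Complex.abs z := by linarith
      _ = 1 := by simp [hRdef]
  have hps : HasFPowerSeriesOnBall g (cauchyPowerSeries g z R') z R' :=
    (hg.mono hsubR').hasFPowerSeriesOnBall hR'0
  set P := cauchyPowerSeries g z R' with hP
  set r'' : NNReal := ⟨(r + R')/2, by positivity⟩ with hr''def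
  have hrr'' : r < (r'' : ℝ) := by show r < (r + (R':ℝ))/2; linarith
  have hr''R' : (r'' : ℝ) < (R' : ℝ) := by show (r + (R':ℝ))/2 < R'; linarith
  have hTU0 : TendstoUniformlyOn (fun m y => P.partialSum m y) (fun y => g (z + y))
      Filter.atTop (ball (0:ℂ) (r'':ℝ)) :=
    hps.tendstoUniformlyOn (by exact_mod_cast ENNReal.coe_lt_coe.mpr (by exact_mod_cast hr''R'))
  -- polynomials
  set pn : ℕ → Polynomial ℂ := fun m => ∑ i ∈ Finset.range m,
      Polynomial.C (P.coeff i) * (Polynomial.X - Polynomial.C z)^i with hpn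
  have heval : ∀ m ζ, (pn m).eval ζ = P.partialSum m (ζ - z) := by
    intro m ζ
    rw [hpn]
    simp only [Polynomial.eval_finset_sum, Polynomial.eval_mul, Polynomial.eval_C,
      Polynomial.eval_pow, Polynomial.eval_sub, Polynomial.eval_X]
    unfold FormalMultilinearSeries.partialSum
    apply Finset.sum_congr rfl
    intro i _
    rw [FormalMultilinearSeries.apply_eq_pow_smul_coeff, smul_eq_mul]
    ring
  set Fm : ℕ → ℂ → ℂ := fun m ζ => (pn m).eval ζ with hFm
  have hTUF : TendstoUniformlyOn Fm g Filter.atTop (ball z (r'':ℝ)) := by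
    have h1 := hTU0.comp (fun ζ => ζ - z)
    have hpre : (fun ζ : ℂ => ζ - z) ⁻¹' (ball (0:ℂ) (r'':ℝ)) = ball z (r'':ℝ) := by
      ext w
      simp [mem_ball, Complex.dist_eq]
    rw [hpre] at h1
    have h2 : TendstoUniformlyOn (fun m => (fun y => P.partialSum m y) ∘ (fun ζ => ζ - z))
        ((fun y => g (z + y)) ∘ (fun ζ => ζ - z)) Filter.atTop (ball z (r'':ℝ)) := h1
    apply (h2.congr _).congr_right
    · intro w _
      simp only [Function.comp_apply]
      rw [add_sub_cancel]
    · filter_upwards with m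
      intro w _
      simp only [Function.comp_apply]
      exact (heval m w).symm
  have hFmdiff : ∀ m, DifferentiableOn ℂ (Fm m) (ball z (r'':ℝ)) :=
    fun m => (Polynomial.differentiable (pn m)).differentiableOn
  have hTLUd := (hTUF.tendstoLocallyUniformlyOn).deriv
    (Filter.Eventually.of_forall hFmdiff) isOpen_ball
  have hderiv_eq : ∀ m, (deriv ∘ Fm) m = fun ζ => (pn m).derivative.eval ζ := by
    intro m
    funext ζ
    exact Polynomial.deriv (pn m)
  -- pointwise at z
  have hzmem : z ∈ ball z (r'':ℝ) := mem_ball_self (lt_trans hr hrr'')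
  have hFmz : Filter.Tendsto (fun m => (pn m).eval z) Filter.atTop (nhds (g z)) :=
    hTUF.tendstoLocallyUniformlyOn.tendsto_at hzmem
  have hFm'z : Filter.Tendsto (fun m => (pn m).derivative.eval z) Filter.atTop
      (nhds (deriv g z)) :=
    Filter.Tendsto.congr (fun m => congrFun (hderiv_eq m) z) (hTLUd.tendsto_at hzmem)
  have hne : ∀ᶠ m in Filter.atTop, (pn m).eval z ≠ 0 := hFmz.eventually_ne hgz
  -- uniform on sphere
  have hsphsub : sphere z r ⊆ ball z (r'':ℝ) := fun w hw => by
    simp only [mem_sphere_iff_norm] at hw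
    simp only [mem_ball, Complex.dist_eq, ← Complex.norm_eq_abs, hw]
    exact hrr''
  have hTUe : TendstoUniformlyOn Fm g Filter.atTop (sphere z r) := hTUF.mono hsphsub
  have hTUd : TendstoUniformlyOn (deriv ∘ Fm) (deriv g) Filter.atTop (sphere z r) :=
    ((tendstoLocallyUniformlyOn_iff_forall_isCompact isOpen_ball).mp hTLUd (sphere z r)
      hsphsub (isCompact_sphere z r))
  -- bounds on sphere
  have hgcont : ContinuousOn g (sphere z r) :=
    hg.continuousOn.mono (fun w hw => hsub (sphere_subset_closedBall hw))
  have hgdiffan := hg.analyticOnNhd isOpen_ball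
  have hdgcont : ContinuousOn (deriv g) (sphere z r) :=
    (hgdiffan.deriv.continuousOn).mono (fun w hw => hsub (sphere_subset_closedBall hw))
  have hsphne : (sphere z r).Nonempty := NormedSpace.sphere_nonempty.mpr hr.le
  obtain ⟨xg, _, hxg⟩ := (isCompact_sphere z r).exists_isMaxOn hsphne
    (Complex.continuous_abs.comp_continuousOn hgcont)
  obtain ⟨xd, _, hxd⟩ := (isCompact_sphere z r).exists_isMaxOn hsphne
    (Complex.continuous_abs.comp_continuousOn hdgcont)
  set A : ℝ := Complex.abs (g xg) + 1 with hA
  set D : ℝ := Complex.abs (deriv g xd) + 1 with hD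
  have hA0 : 0 ≤ A := by positivity
  have hD0 : 0 ≤ D := by positivity
  have hboundg : ∀ᶠ m in Filter.atTop, ∀ w ∈ sphere z r, Complex.abs ((pn m).eval w) ≤ A := by
    have := (Metric.tendstoUniformlyOn_iff.mp hTUe) 1 one_pos
    filter_upwards [this] with m hm w hw
    have h1 := hm w hw
    rw [Complex.dist_eq, Complex.norm_eq_abs] at h1
    have h2 : Complex.abs (Fm m w) - Complex.abs (g w) ≤ Complex.abs (Fm m w - g w) := by
      simpa [Complex.norm_eq_abs] using norm_sub_norm_le (Fm m w) (g w)
    have h4 : Complex.abs (Fm m w - g w) = Complex.abs (g w - Fm m w) :=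
      AbsoluteValue.map_sub _ _ _
    have h3 : Complex.abs (g w) ≤ Complex.abs (g xg) := hxg hw
    simp only [hFm] at h1 h2 h4
    rw [hA]; linarith
  have hboundd : ∀ᶠ m in Filter.atTop, ∀ w ∈ sphere z r,
      Complex.abs ((pn m).derivative.eval w) ≤ D := by
    have := (Metric.tendstoUniformlyOn_iff.mp hTUd) 1 one_pos
    filter_upwards [this] with m hm w hw
    have h1 := hm w hw
    rw [Complex.dist_eq, Complex.norm_eq_abs] at h1
    have heq : (deriv ∘ Fm) m w = (pn m).derivative.eval w := by rw [hderiv_eq]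
    rw [heq] at h1
    have h2 : Complex.abs ((pn m).derivative.eval w) - Complex.abs (deriv g w)
        ≤ Complex.abs ((pn m).derivative.eval w - deriv g w) := by
      simpa [Complex.norm_eq_abs] using
        norm_sub_norm_le ((pn m).derivative.eval w) (deriv g w)
    have h4 : Complex.abs ((pn m).derivative.eval w - deriv g w)
        = Complex.abs (deriv g w - (pn m).derivative.eval w) := AbsoluteValue.map_sub _ _ _
    have h3 : Complex.abs (deriv g w) ≤ Complex.abs (deriv g xd) := hxd hw
    rw [hD]; linarith
  -- integral convergence
  have htendI : Filter.Tendsto (fun m => ∫ θ in (0:ℝ)..(2*Real.pi),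
        Complex.abs ((pn m).derivative.eval (circleMap z r θ)) ^ 2 *
        Complex.abs ((pn m).eval (circleMap z r θ)) ^ ((n:ℝ) + τ))
      Filter.atTop (nhds (∫ θ in (0:ℝ)..(2*Real.pi),
        Complex.abs (deriv g (circleMap z r θ)) ^ 2 *
        Complex.abs (g (circleMap z r θ)) ^ ((n:ℝ) + τ))) := by
    apply intervalIntegral.tendsto_integral_filter_of_dominated_convergence
      (bound := fun _ => D^2 * A^((n:ℝ)+τ))
    · filter_upwards with m
      apply Continuous.aestronglyMeasurable
      apply Continuous.mul
      · exact ((Complex.continuous_abs.comp ((Polynomial.continuous _).comp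
          (continuous_circleMap z r))).pow 2)
      · rw [continuous_iff_continuousAt]
        intro x
        exact (Real.continuousAt_rpow_const _ _ (Or.inr hβ0)).comp
          (Complex.continuous_abs.comp ((Polynomial.continuous _).comp
            (continuous_circleMap z r))).continuousAt
    · filter_upwards [hboundg, hboundd] with m hmg hmd
      filter_upwards with θ _
      have hw : circleMap z r θ ∈ sphere z r := circleMap_mem_sphere z hr.le θ
      rw [Real.norm_eq_abs, abs_of_nonneg (by positivity)]
      apply mul_le_mul
      · exact pow_le_pow_left₀ (Complex.abs.nonneg _) (hmd _ hw) 2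
      · exact Real.rpow_le_rpow (Complex.abs.nonneg _) (hmg _ hw) hβ0
      · exact Real.rpow_nonneg (Complex.abs.nonneg _) _
      · positivity
    · exact intervalIntegrable_const
    · filter_upwards with θ _
      have hw : circleMap z r θ ∈ sphere z r := circleMap_mem_sphere z hr.le θ
      apply Filter.Tendsto.mul
      · have h1 : Filter.Tendsto (fun m => (pn m).derivative.eval (circleMap z r θ))
            Filter.atTop (nhds (deriv g (circleMap z r θ))) :=
          Filter.Tendsto.congr (fun m => congrFun (hderiv_eq m) _)
            ((hTUd.tendstoLocallyUniformlyOn).tendsto_at hw)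
        exact (((Complex.continuous_abs.tendsto _).comp h1).pow 2)
      · have h1 : Filter.Tendsto (fun m => (pn m).eval (circleMap z r θ))
            Filter.atTop (nhds (g (circleMap z r θ))) := by
          exact (hTUe.tendstoLocallyUniformlyOn).tendsto_at hw
        exact ((Real.continuousAt_rpow_const _ _ (Or.inr hβ0)).tendsto).comp
          ((Complex.continuous_abs.tendsto _).comp h1)
  -- LHS convergence
  have htendL : Filter.Tendsto (fun m =>
      Complex.abs ((pn m).derivative.eval z) ^ 2 * Complex.abs ((pn m).eval z) ^ ((n:ℝ) + τ))
      Filter.atTop (nhds (Complex.abs (deriv g z) ^ 2 * Complex.abs (g z) ^ ((n:ℝ) + τ))) := by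
    apply Filter.Tendsto.mul
    · exact ((Complex.continuous_abs.tendsto _).comp hFm'z).pow 2
    · exact ((Real.continuousAt_rpow_const _ _ (Or.inr hβ0)).tendsto).comp
        ((Complex.continuous_abs.tendsto _).comp hFmz)
  -- conclude
  apply le_of_tendsto_of_tendsto htendL (htendI.div_const (2*Real.pi))
  filter_upwards [hne] with m hm
  exact step2 (pn m) z hr hm n hτ0

/-- `v` is subharmonic on the unit disc: continuous and satisfying the sub-mean
value inequality on every circle contained in the disc. -/
def SubharmonicOnDisc (v : ℂ → ℝ) : Prop :=
  ContinuousOn v (Metric.ball 0 1) ∧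
  ∀ z ∈ Metric.ball (0:ℂ) 1, ∀ r : ℝ, 0 < r → Metric.closedBall z r ⊆ Metric.ball (0:ℂ) 1 →
    v z ≤ (∫ θ in (0:ℝ)..(2 * Real.pi), v (z + (r : ℂ) * Complex.exp ((θ : ℂ) * Complex.I)))
            / (2 * Real.pi)

/-- If `g` is holomorphic on the unit disc and `q ≥ 1`, then
`v z = |∇|g|^q|(z)² = q² |g z|^(2q-2) |g' z|²` is a nonnegative subharmonic function
on the unit disc. -/
theorem stmt_2 (g : ℂ → ℂ) (hg : DifferentiableOn ℂ g (Metric.ball 0 1))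
    (q : ℝ) (hq : 1 ≤ q) :
    (∀ z ∈ Metric.ball (0:ℂ) 1,
      0 ≤ q ^ 2 * ‖g z‖ ^ (2 * q - 2) * ‖deriv g z‖ ^ 2) ∧
    SubharmonicOnDisc
      (fun z => q ^ 2 * ‖g z‖ ^ (2 * q - 2) * ‖deriv g z‖ ^ 2) := by
  simp only [Complex.norm_eq_abs]
  have hβ0 : (0:ℝ) ≤ 2 * q - 2 := by linarith
  have hgan := hg.analyticOnNhd isOpen_ball
  have hdc : ContinuousOn (deriv g) (ball (0:ℂ) 1) := (hgan.deriv).continuousOn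
  constructor
  · intro z _
    positivity
  constructor
  · -- continuity
    apply ContinuousOn.mul
    apply ContinuousOn.mul continuousOn_const
    · exact (Complex.continuous_abs.comp_continuousOn hg.continuousOn).rpow_const
        (fun x _ => Or.inr hβ0)
    · exact (Complex.continuous_abs.comp_continuousOn hdc).pow 2
  · intro z hz r hr hsub
    have hcirc : ∀ θ : ℝ, z + (r : ℂ) * Complex.exp ((θ : ℂ) * Complex.I) = circleMap z r θ :=
      fun θ => by simp [circleMap]
    have hq0 : (0:ℝ) < q ^ 2 := by positivity
    by_cases hβ : 2 * q - 2 = 0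
    · -- q = 1 case
      have hkey : Complex.abs (deriv g z) ^ 2
          ≤ (∫ θ in (0:ℝ)..(2*Real.pi), Complex.abs (deriv g (circleMap z r θ)) ^ 2)
            / (2*Real.pi) := by
        have hdd : ∀ w ∈ closedBall z r, DifferentiableAt ℂ (fun ζ => (deriv g ζ)^2) w := by
          intro w hw
          exact ((hgan.deriv w (hsub hw)).differentiableAt).pow 2
        have h := norm_center (F := fun ζ => (deriv g ζ)^2) hr
          (fun w hw => (hdd w hw).continuousAt.continuousWithinAt)
          (fun w hw => hdd w (ball_subset_closedBall hw))
        simpa [map_pow] using h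
      calc q ^ 2 * Complex.abs (g z) ^ (2*q - 2) * Complex.abs (deriv g z) ^ 2
          = q ^ 2 * Complex.abs (deriv g z) ^ 2 := by rw [hβ, Real.rpow_zero]; ring
        _ ≤ q ^ 2 * ((∫ θ in (0:ℝ)..(2*Real.pi), Complex.abs (deriv g (circleMap z r θ)) ^ 2)
            / (2*Real.pi)) := by
            exact mul_le_mul_of_nonneg_left hkey hq0.le
        _ = (∫ θ in (0:ℝ)..(2*Real.pi), q ^ 2 * Complex.abs (deriv g (circleMap z r θ)) ^ 2)
            / (2*Real.pi) := by
            rw [intervalIntegral.integral_const_mul]; ring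
        _ = _ := by
            congr 1
            apply intervalIntegral.integral_congr
            intro θ _
            simp only [hcirc θ, hβ, Real.rpow_zero]
            ring
    · have hβpos : 0 < 2 * q - 2 := lt_of_le_of_ne hβ0 (Ne.symm hβ)
      have hkey : Complex.abs (deriv g z) ^ 2 * Complex.abs (g z) ^ (2*q-2)
          ≤ (∫ θ in (0:ℝ)..(2*Real.pi), Complex.abs (deriv g (circleMap z r θ)) ^ 2 *
              Complex.abs (g (circleMap z r θ)) ^ (2*q-2)) / (2*Real.pi) := by
        by_cases hgz : g z = 0
        · have hLHS : Complex.abs (deriv g z) ^ 2 * Complex.abs (g z) ^ (2*q-2) = 0 := by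
            rw [hgz]
            simp [Real.zero_rpow hβ]
          rw [hLHS]
          apply div_nonneg _ (by positivity)
          apply intervalIntegral.integral_nonneg (by positivity)
          intro θ _
          positivity
        · have h := step3 hg hr hsub hgz 0 hβ0
          simpa using h
      calc q ^ 2 * Complex.abs (g z) ^ (2*q - 2) * Complex.abs (deriv g z) ^ 2
          = q ^ 2 * (Complex.abs (deriv g z) ^ 2 * Complex.abs (g z) ^ (2*q-2)) := by ring
        _ ≤ q ^ 2 * ((∫ θ in (0:ℝ)..(2*Real.pi), Complex.abs (deriv g (circleMap z r θ)) ^ 2 *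
              Complex.abs (g (circleMap z r θ)) ^ (2*q-2)) / (2*Real.pi)) :=
            mul_le_mul_of_nonneg_left hkey hq0.le
        _ = (∫ θ in (0:ℝ)..(2*Real.pi), q ^ 2 * (Complex.abs (deriv g (circleMap z r θ)) ^ 2 *
              Complex.abs (g (circleMap z r θ)) ^ (2*q-2))) / (2*Real.pi) := by
            rw [intervalIntegral.integral_const_mul]; ring
        _ = _ := by
            congr 1
            apply intervalIntegral.integral_congr
            intro θ _
            simp only [hcirc θ]
            ring
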